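/- Under the variable–variable block of covariance evolution with its initial conditions, for all y ∈ (0,1] one has Σ_{k∈L} δ^{l_k,l_k}/(k² l̂_k) = (ε ε̃ / e) Σ_{k∈L} λ_k/k + Σ_{k∈L} ((l̂_k − e)/e) · (ε y^k − 1)/k. (Intermediate identity in the proof of Theorem 1, equation (1).) -/

import Mathlib

open Finset

namespace LDPC

/-- λ(y) = Σ_{k∈L} λ_k y^{k-1} -/
noncomputable def lamP (L : Finset ℕ) (lam : ℕ → ℝ) (y : ℝ) : ℝ :=
  ∑ k ∈ L, lam k * y ^ (k - 1)

/-- λ'(y) = Σ_{k∈L} (k-1) λ_k y^{k-2} -/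
noncomputable def lamD (L : Finset ℕ) (lam : ℕ → ℝ) (y : ℝ) : ℝ :=
  ∑ k ∈ L, ((k : ℝ) - 1) * lam k * y ^ (k - 2)

/-- λ''(y) = Σ_{k∈L} (k-1)(k-2) λ_k y^{k-3} -/
noncomputable def lamDD (L : Finset ℕ) (lam : ℕ → ℝ) (y : ℝ) : ℝ :=
  ∑ k ∈ L, ((k : ℝ) - 1) * ((k : ℝ) - 2) * lam k * y ^ (k - 3)

/-- ρ(z) = Σ_{k∈R} ρ_k z^{k-1} -/
noncomputable def rhoP (R : Finset ℕ) (rho : ℕ → ℝ) (z : ℝ) : ℝ :=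
  ∑ k ∈ R, rho k * z ^ (k - 1)

/-- ρ'(z) = Σ_{k∈R} (k-1) ρ_k z^{k-2} -/
noncomputable def rhoD (R : Finset ℕ) (rho : ℕ → ℝ) (z : ℝ) : ℝ :=
  ∑ k ∈ R, ((k : ℝ) - 1) * rho k * z ^ (k - 2)

/-- x = ελ(y) -/
noncomputable def xF (L : Finset ℕ) (lam : ℕ → ℝ) (ε y : ℝ) : ℝ := ε * lamP L lam y

/-- x' = ελ'(y) -/
noncomputable def xD (L : Finset ℕ) (lam : ℕ → ℝ) (ε y : ℝ) : ℝ := ε * lamD L lam y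

/-- x'' = ελ''(y) -/
noncomputable def xDD (L : Finset ℕ) (lam : ℕ → ℝ) (ε y : ℝ) : ℝ := ε * lamDD L lam y

/-- e = xy -/
noncomputable def eF (L : Finset ℕ) (lam : ℕ → ℝ) (ε y : ℝ) : ℝ := xF L lam ε y * y

/-- a = (x'y + x)/x -/
noncomputable def aF (L : Finset ℕ) (lam : ℕ → ℝ) (ε y : ℝ) : ℝ :=
  (xD L lam ε y * y + xF L lam ε y) / xF L lam ε y

/-- l̂_k(y) = ε λ_k y^k -/
noncomputable def lhat (lam : ℕ → ℝ) (ε : ℝ) (k : ℕ) (y : ℝ) : ℝ := ε * lam k * y ^ k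

/-- r̂_j(y); for j = 1 the special formula x(y-1+ρ(1-x)), else Σ_{i∈R} ρ_i C(i-1,j-1) x^j (1-x)^{i-j}. -/
noncomputable def rhat (L R : Finset ℕ) (lam rho : ℕ → ℝ) (ε : ℝ) (j : ℕ) (y : ℝ) : ℝ :=
  if j = 1 then xF L lam ε y * (y - 1 + rhoP R rho (1 - xF L lam ε y))
  else ∑ i ∈ R, rho i * ((i - 1).choose (j - 1) : ℝ) * xF L lam ε y ^ j *
    (1 - xF L lam ε y) ^ (i - j)

/-- G_j(y) = j(r̂_{j+1} - r̂_j)/x for j ≤ d_c - 1, and G_{d_c}(y) = -d_c r̂_{d_c}/x. -/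
noncomputable def Gf (L R : Finset ℕ) (lam rho : ℕ → ℝ) (ε : ℝ) (dc j : ℕ) (y : ℝ) : ℝ :=
  if j = dc then -((dc : ℝ) * rhat L R lam rho ε dc y) / xF L lam ε y
  else (j : ℝ) * (rhat L R lam rho ε (j + 1) y - rhat L R lam rho ε j y) / xF L lam ε y

/-- F(y) = Σ_{k∈L} (λ_k/k)[ε²(y^k-1)² + ε(y^k-1)] -/
noncomputable def Ff (L : Finset ℕ) (lam : ℕ → ℝ) (ε y : ℝ) : ℝ :=
  ∑ k ∈ L, lam k / (k : ℝ) * (ε ^ 2 * (y ^ k - 1) ^ 2 + ε * (y ^ k - 1))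

/-- F'(y) = 2Σ_{k∈L} ε²λ_k y^{2k-1} - (ε - ε̃)x -/
noncomputable def Fd (L : Finset ℕ) (lam : ℕ → ℝ) (ε y : ℝ) : ℝ :=
  2 * ∑ k ∈ L, ε ^ 2 * lam k * y ^ (2 * k - 1) - (ε - (1 - ε)) * xF L lam ε y

/-- V_{i,j}(y) = Σ_{s∈R} sρ_s C(s-1,i-1)C(s-1,j-1) x^{i+j} (1-x)^{2s-i-j} -/
noncomputable def Vf (L R : Finset ℕ) (lam rho : ℕ → ℝ) (ε : ℝ) (i j : ℕ) (y : ℝ) : ℝ :=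
  ∑ s ∈ R, (s : ℝ) * rho s * ((s - 1).choose (i - 1) : ℝ) * ((s - 1).choose (j - 1) : ℝ) *
    xF L lam ε y ^ (i + j) * (1 - xF L lam ε y) ^ (2 * s - i - j)

/-- The variable–variable block of covariance evolution, with its initial conditions. -/
def CEvv (L : Finset ℕ) (lam : ℕ → ℝ) (ε : ℝ) (δll : ℕ → ℕ → ℝ → ℝ) : Prop :=
  (∀ k ∈ L, ∀ s ∈ L, ∀ y ∈ Set.Ioc (0 : ℝ) 1,
    HasDerivWithinAt (δll k s)
      (-(xF L lam ε y) *
          (((s : ℝ) * lhat lam ε s y / eF L lam ε y ^ 2) * ∑ t ∈ L, δll k t y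
            + ((k : ℝ) * lhat lam ε k y / eF L lam ε y ^ 2) * ∑ t ∈ L, δll s t y
            - (((k : ℝ) + (s : ℝ)) / eF L lam ε y) * δll k s y)
        - xF L lam ε y * (k : ℝ) * (s : ℝ) * (lhat lam ε k y / eF L lam ε y) *
            ((if k = s then (1 : ℝ) else 0) - lhat lam ε s y / eF L lam ε y))
      (Set.Ioc 0 1) y)
  ∧ ∀ k ∈ L, ∀ s ∈ L,
      δll k s 1 = (if k = s then (1 : ℝ) else 0) * (k : ℝ) * lam k * ε * (1 - ε)

/-- The variable–check block of covariance evolution, with its initial conditions. -/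
def CEvc (L R : Finset ℕ) (lam rho : ℕ → ℝ) (ε : ℝ) (dc : ℕ)
    (δll δlr : ℕ → ℕ → ℝ → ℝ) : Prop :=
  (∀ k ∈ L, ∀ j ∈ Finset.Icc 1 (dc - 1), ∀ y ∈ Set.Ioc (0 : ℝ) 1,
    HasDerivWithinAt (δlr k j)
      (2 * (xD L lam ε y / eF L lam ε y) * Gf L R lam rho ε dc j y * ∑ t ∈ L, δll k t y
        - (Gf L R lam rho ε dc j y / y ^ 2) * ∑ i ∈ L, ((i : ℝ) - 1) * δll k i y
        - xF L lam ε y * (aF L lam ε y - (k : ℝ)) * ((k : ℝ) * lhat lam ε k y / eF L lam ε y)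
            * (Gf L R lam rho ε dc j y / y)
        - ((k : ℝ) * lhat lam ε k y / (eF L lam ε y * y)) * ∑ t ∈ L, δlr t j y
        + ((k : ℝ) / y) * δlr k j y
        - (j : ℝ) * (xD L lam ε y / xF L lam ε y) *
            ((if j + 1 = dc then
                (∑ t ∈ L, δll k t y) - ∑ j' ∈ Finset.Icc 1 (dc - 1), δlr k j' y
              else δlr k (j + 1) y) - δlr k j y))
      (Set.Ioc 0 1) y)
  ∧ ∀ k ∈ L, ∀ j ∈ Finset.Icc 1 (dc - 1),
      δlr k j 1 = -((k : ℝ) * lam k * ε * (1 - ε)) * Gf L R lam rho ε dc j 1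

/-- The check–check block of covariance evolution, with symmetry and initial conditions. -/
def CErr (L R : Finset ℕ) (lam rho : ℕ → ℝ) (ε : ℝ) (dc : ℕ)
    (δlr δrr : ℕ → ℕ → ℝ → ℝ) : Prop :=
  (∀ i ∈ Finset.Icc 1 (dc - 1), ∀ j ∈ Finset.Icc 1 (dc - 1), ∀ y ∈ Set.Ioc (0 : ℝ) 1,
      δrr i j y = δrr j i y)
  ∧ (∀ i ∈ Finset.Icc 1 (dc - 1), ∀ j ∈ Finset.Icc 1 (dc - 1), ∀ y ∈ Set.Ioc (0 : ℝ) 1,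
    HasDerivWithinAt (δrr i j)
      (-(xD L lam ε y / xF L lam ε y) *
          ((i : ℝ) * (if i + 1 = dc then
                (∑ k ∈ L, δlr k j y) - ∑ i' ∈ Finset.Icc 1 (dc - 1), δrr i' j y
              else δrr (i + 1) j y)
            + (j : ℝ) * (if j + 1 = dc then
                (∑ k ∈ L, δlr k i y) - ∑ i' ∈ Finset.Icc 1 (dc - 1), δrr i' i y
              else δrr (j + 1) i y)
            - ((i : ℝ) + (j : ℝ)) * δrr i j y)
        + (∑ k ∈ L, ((2 * aF L lam ε y - (k : ℝ) - 1) / y ^ 2) *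
            (δlr k j y * Gf L R lam rho ε dc i y + δlr k i y * Gf L R lam rho ε dc j y))
        - xF L lam ε y *
            (((xDD L lam ε y * xF L lam ε y - xD L lam ε y ^ 2) / xF L lam ε y ^ 2) *
                Gf L R lam rho ε dc i y * Gf L R lam rho ε dc j y
              + (i : ℝ) * (j : ℝ) * (xD L lam ε y / xF L lam ε y ^ 2) *
                  ((if i = j then rhat L R lam rho ε (j + 1) y + rhat L R lam rho ε j y else 0)
                    - (if i = j + 1 then rhat L R lam rho ε i y else 0)
                    - (if j = i + 1 then rhat L R lam rho ε j y else 0))))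
      (Set.Ioc 0 1) y)
  ∧ ∀ i ∈ Finset.Icc 1 (dc - 1), ∀ j ∈ Finset.Icc 1 (dc - 1),
      δrr i j 1 = (if i = j then (i : ℝ) * rhat L R lam rho ε i 1 else 0)
        - Vf L R lam rho ε i j 1
        + (∑ k ∈ L, ((k : ℝ) - 1) * lam k) * ε * (1 - ε) *
            Gf L R lam rho ε dc i 1 * Gf L R lam rho ε dc j 1

/-! ### Auxiliary definitions and lemmas for `statement_6` -/

noncomputable def eS (L : Finset ℕ) (lam : ℕ → ℝ) (ε y : ℝ) : ℝ := ∑ t ∈ L, ε * lam t * y ^ t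
noncomputable def MS (L : Finset ℕ) (lam : ℕ → ℝ) (ε y : ℝ) : ℝ := ∑ t ∈ L, ε * t * lam t * y ^ t
noncomputable def PS (L : Finset ℕ) (lam : ℕ → ℝ) (ε y : ℝ) : ℝ := ∑ t ∈ L, ε * lam t * y ^ (2*t)
noncomputable def Af (L : Finset ℕ) (lam : ℕ → ℝ) (ε : ℝ) : ℝ := ∑ t ∈ L, ε * lam t / t
noncomputable def Bf (L : Finset ℕ) (lam : ℕ → ℝ) (ε y : ℝ) : ℝ := ∑ t ∈ L, ε * lam t * y ^ t / t
noncomputable def Cf (L : Finset ℕ) (lam : ℕ → ℝ) (ε y : ℝ) : ℝ := ∑ t ∈ L, ε * lam t * y ^ (2*t) / t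
noncomputable def pf (L : Finset ℕ) (lam : ℕ → ℝ) (ε y : ℝ) : ℝ :=
  ((1-ε) * Af L lam ε / 2 - ε * Cf L lam ε y / 2 + (ε - 1/2) * Bf L lam ε y) / (eS L lam ε y)^2
noncomputable def rf (L : Finset ℕ) (lam : ℕ → ℝ) (ε : ℝ) (k : ℕ) (y : ℝ) : ℝ :=
  ε * (y^k - 1) / (k * eS L lam ε y)
noncomputable def Phi (L : Finset ℕ) (lam : ℕ → ℝ) (ε : ℝ) (k s : ℕ) (y : ℝ) : ℝ :=
  (k*s*ε^2*lam k*lam s) * (y^k * y^s * (2*pf L lam ε y + rf L lam ε k y + rf L lam ε s y))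
  + (if k = s then (k*ε*lam k) * (y^k*(1-ε*y^k)) else 0)
noncomputable def SPhi (L : Finset ℕ) (lam : ℕ → ℝ) (ε : ℝ) (k : ℕ) (y : ℝ) : ℝ :=
  k * (ε*lam k*y^k) * ((2*pf L lam ε y + rf L lam ε k y) * MS L lam ε y
    + (ε/eS L lam ε y)*(PS L lam ε y - eS L lam ε y) + (1 - ε*y^k))
noncomputable def FcE (L : Finset ℕ) (lam : ℕ → ℝ) (ε : ℝ) (k s : ℕ) (y : ℝ) : ℝ :=
  -(eS L lam ε y / y) * (((s:ℝ) * (ε*lam s*y^s) / (eS L lam ε y)^2) * SPhi L lam ε k y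
    + ((k:ℝ)*(ε*lam k*y^k)/(eS L lam ε y)^2) * SPhi L lam ε s y
    - (((k:ℝ)+(s:ℝ))/eS L lam ε y) * Phi L lam ε k s y)
  - (eS L lam ε y / y) * (k:ℝ) * (s:ℝ) * ((ε*lam k*y^k)/eS L lam ε y) *
      ((if k = s then (1:ℝ) else 0) - (ε*lam s*y^s)/eS L lam ε y)

/-- The state space for covariance evolution restricted to `L × L`. -/
abbrev Evv (L : Finset ℕ) : Type := ({x // x ∈ L} × {x // x ∈ L}) → ℝ

/-- The vector field of the variable–variable block, in closed (`eS`) language. -/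
noncomputable def Fv (L : Finset ℕ) (lam : ℕ → ℝ) (ε : ℝ) (y : ℝ) (v : Evv L)
    (p : {x // x ∈ L} × {x // x ∈ L}) : ℝ :=
  -(eS L lam ε y / y) * ((((p.2:ℕ):ℝ) * (ε*lam (p.2:ℕ)*y^(p.2:ℕ)) / (eS L lam ε y)^2) *
      (∑ t : {x // x ∈ L}, v (p.1, t))
    + (((p.1:ℕ):ℝ)*(ε*lam (p.1:ℕ)*y^(p.1:ℕ))/(eS L lam ε y)^2) *
      (∑ t : {x // x ∈ L}, v (p.2, t))
    - ((((p.1:ℕ):ℝ)+((p.2:ℕ):ℝ))/eS L lam ε y) * v p)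
  - (eS L lam ε y / y) * ((p.1:ℕ):ℝ) * ((p.2:ℕ):ℝ) * ((ε*lam (p.1:ℕ)*y^(p.1:ℕ))/eS L lam ε y) *
      ((if ((p.1:ℕ)) = ((p.2:ℕ)) then (1:ℝ) else 0) - (ε*lam (p.2:ℕ)*y^(p.2:ℕ))/eS L lam ε y)

lemma eF_eq (L : Finset ℕ) (lam : ℕ → ℝ) (ε : ℝ) (h2 : ∀ k ∈ L, 2 ≤ k) (y : ℝ) :
    eF L lam ε y = eS L lam ε y := by
  simp only [eF, xF, lamP, eS, Finset.mul_sum, Finset.sum_mul]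
  refine Finset.sum_congr rfl fun t ht => ?_
  have h1 : t - 1 + 1 = t := by have := h2 t ht; omega
  calc ε * (lam t * y ^ (t-1)) * y = ε * lam t * (y ^ (t-1) * y) := by ring
    _ = ε * lam t * y ^ t := by rw [← pow_succ, h1]

lemma xF_eq (L : Finset ℕ) (lam : ℕ → ℝ) (ε : ℝ) (h2 : ∀ k ∈ L, 2 ≤ k) {y : ℝ} (hy : y ≠ 0) :
    xF L lam ε y = eS L lam ε y / y := by
  rw [eq_div_iff hy, ← eF_eq L lam ε h2 y]; rfl

lemma eS_pos (L : Finset ℕ) (lam : ℕ → ℝ) (ε : ℝ) (hL : L.Nonempty)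
    (hlamPos : ∀ k ∈ L, 0 < lam k) (hε : 0 < ε) {y : ℝ} (hy : 0 < y) :
    0 < eS L lam ε y :=
  Finset.sum_pos (fun t ht => by have := hlamPos t ht; positivity) hL

lemma eS_mono (L : Finset ℕ) (lam : ℕ → ℝ) (ε : ℝ)
    (hlamPos : ∀ k ∈ L, 0 < lam k) (hε : 0 < ε) {a y : ℝ} (ha : 0 ≤ a) (hay : a ≤ y) :
    eS L lam ε a ≤ eS L lam ε y := by
  refine Finset.sum_le_sum fun t ht => ?_
  have := hlamPos t ht
  have h0 : (0:ℝ) ≤ ε * lam t := by positivity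
  exact mul_le_mul_of_nonneg_left (pow_le_pow_left₀ ha hay t) h0

lemma eS_le (L : Finset ℕ) (lam : ℕ → ℝ) (ε : ℝ) (h2 : ∀ k ∈ L, 2 ≤ k)
    (hlamPos : ∀ k ∈ L, 0 < lam k) (hlamSum : ∑ k ∈ L, lam k = 1) (hε : 0 < ε)
    {y : ℝ} (hy0 : 0 ≤ y) (hy1 : y ≤ 1) :
    eS L lam ε y ≤ ε * y := by
  calc eS L lam ε y ≤ ∑ t ∈ L, ε * lam t * y := by
        refine Finset.sum_le_sum fun t ht => ?_
        have h1 : 1 ≤ t := le_trans one_le_two (h2 t ht)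
        have hp : y ^ t ≤ y ^ 1 := pow_le_pow_of_le_one hy0 hy1 h1
        have := hlamPos t ht
        have h0 : (0:ℝ) ≤ ε * lam t := by positivity
        simpa using mul_le_mul_of_nonneg_left hp h0
    _ = ε * y := by rw [← Finset.sum_mul, ← Finset.mul_sum, hlamSum, mul_one]

lemma lam_le_one (L : Finset ℕ) (lam : ℕ → ℝ)
    (hlamPos : ∀ k ∈ L, 0 < lam k) (hlamSum : ∑ k ∈ L, lam k = 1) {k : ℕ} (hk : k ∈ L) :
    lam k ≤ 1 := by
  rw [← hlamSum]
  exact Finset.single_le_sum (fun t ht => (hlamPos t ht).le) hk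

lemma hasDerivAt_npow (t : ℕ) (ht : 1 ≤ t) {y : ℝ} (hy : y ≠ 0) :
    HasDerivAt (fun y : ℝ => y ^ t) ((t:ℝ) * y ^ t / y) y := by
  have h := hasDerivAt_pow t y
  refine h.congr_deriv ?_
  symm
  rw [div_eq_iff hy, mul_assoc, ← pow_succ, Nat.sub_add_cancel ht]

lemma hasDerivAt_eS (L : Finset ℕ) (lam : ℕ → ℝ) (ε : ℝ) (h2 : ∀ k ∈ L, 2 ≤ k)
    {y : ℝ} (hy : y ≠ 0) :
    HasDerivAt (eS L lam ε) (MS L lam ε y / y) y := by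
  have h := HasDerivAt.fun_sum (u := L)
    (fun t ht => (hasDerivAt_npow t (by have := h2 t ht; omega) hy).const_mul (ε * lam t))
  refine h.congr_deriv ?_
  symm
  rw [MS, Finset.sum_div]
  exact Finset.sum_congr rfl fun t ht => by ring

lemma hasDerivAt_Bf (L : Finset ℕ) (lam : ℕ → ℝ) (ε : ℝ) (h2 : ∀ k ∈ L, 2 ≤ k)
    {y : ℝ} (hy : y ≠ 0) :
    HasDerivAt (Bf L lam ε) (eS L lam ε y / y) y := by
  have h := HasDerivAt.fun_sum (u := L)
    (fun t ht => ((hasDerivAt_npow t (by have := h2 t ht; omega) hy).const_mul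
      (ε * lam t)).div_const (t:ℝ))
  refine h.congr_deriv ?_
  symm
  rw [eS, Finset.sum_div]
  refine Finset.sum_congr rfl fun t ht => ?_
  have ht0 : (t:ℝ) ≠ 0 := Nat.cast_ne_zero.2 (by have := h2 t ht; omega)
  field_simp

lemma hasDerivAt_Cf (L : Finset ℕ) (lam : ℕ → ℝ) (ε : ℝ) (h2 : ∀ k ∈ L, 2 ≤ k)
    {y : ℝ} (hy : y ≠ 0) :
    HasDerivAt (Cf L lam ε) (2 * PS L lam ε y / y) y := by
  have h := HasDerivAt.fun_sum (u := L)
    (fun t ht => ((hasDerivAt_npow (2*t) (by have := h2 t ht; omega) hy).const_mul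
      (ε * lam t)).div_const (t:ℝ))
  refine h.congr_deriv ?_
  symm
  rw [PS, Finset.mul_sum, Finset.sum_div]
  refine Finset.sum_congr rfl fun t ht => ?_
  have ht0 : (t:ℝ) ≠ 0 := Nat.cast_ne_zero.2 (by have := h2 t ht; omega)
  have hcast : ((2*t : ℕ) : ℝ) = 2 * (t:ℝ) := by push_cast; ring
  rw [hcast]
  field_simp

set_option maxHeartbeats 4000000 in
lemma Phi_ode (L : Finset ℕ) (lam : ℕ → ℝ) (ε : ℝ) (h2 : ∀ k ∈ L, 2 ≤ k)
    {k s : ℕ} (hkL : k ∈ L) (hsL : s ∈ L) {y : ℝ} (hy : y ≠ 0) (heS : eS L lam ε y ≠ 0) :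
    HasDerivAt (Phi L lam ε k s) (FcE L lam ε k s y) y := by
  have hk1 : 1 ≤ k := by have := h2 k hkL; omega
  have hs1 : 1 ≤ s := by have := h2 s hsL; omega
  have hk0 : (k:ℝ) ≠ 0 := Nat.cast_ne_zero.2 (by omega)
  have hs0 : (s:ℝ) ≠ 0 := Nat.cast_ne_zero.2 (by omega)
  have hu := hasDerivAt_npow k hk1 hy
  have hw := hasDerivAt_npow s hs1 hy
  have hE := hasDerivAt_eS L lam ε h2 hy
  have hB := hasDerivAt_Bf L lam ε h2 hy
  have hC := hasDerivAt_Cf L lam ε h2 hy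
  have hpf : HasDerivAt (pf L lam ε) _ y :=
    (((((hC.const_mul ε).div_const 2).const_sub ((1-ε) * Af L lam ε / 2)).add
      (hB.const_mul (ε - 1/2))).div (hE.pow 2) (pow_ne_zero 2 heS))
  have hrk : HasDerivAt (rf L lam ε k) _ y :=
    ((hu.sub_const 1).const_mul ε).div (hE.const_mul (k:ℝ)) (mul_ne_zero hk0 heS)
  have hrs : HasDerivAt (rf L lam ε s) _ y :=
    ((hw.sub_const 1).const_mul ε).div (hE.const_mul (s:ℝ)) (mul_ne_zero hs0 heS)
  have hmain := ((hu.mul hw).mul (((hpf.const_mul (2:ℝ)).add hrk).add hrs)).const_mul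
    ((k:ℝ)*(s:ℝ)*ε^2*lam k*lam s)
  have hiteD : HasDerivAt (fun y : ℝ => if k = s then ((k:ℝ)*ε*lam k) * (y^k*(1-ε*y^k)) else 0)
      (if k = s then ((k:ℝ)*ε*lam k) *
        (((k:ℝ)*y^k/y)*(1-ε*y^k) + y^k*(-(ε*((k:ℝ)*y^k/y)))) else 0) y := by
    by_cases hks : k = s
    · simp only [if_pos hks]
      exact (hu.mul ((hu.const_mul ε).const_sub 1)).const_mul _
    · simp only [if_neg hks]
      exact hasDerivAt_const y 0
  have htot := hmain.add hiteD
  refine HasDerivAt.congr_deriv htot ?_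
  simp only [FcE, SPhi, Phi, pf, rf, Pi.add_apply, Pi.mul_apply]
  split_ifs with hks
  · subst hks
    field_simp
    ring
  · field_simp
    ring

lemma sum_Phi (L : Finset ℕ) (lam : ℕ → ℝ) (ε : ℝ) (h2 : ∀ k ∈ L, 2 ≤ k)
    {k : ℕ} (hkL : k ∈ L) {y : ℝ} (heS : eS L lam ε y ≠ 0) :
    ∑ t ∈ L, Phi L lam ε k t y = SPhi L lam ε k y := by
  have hterm : ∀ t ∈ L, Phi L lam ε k t y =
      (k*(ε*lam k*y^k)*(2*pf L lam ε y + rf L lam ε k y)) * (ε*(t:ℝ)*lam t*y^t)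
      + (k*(ε*lam k*y^k)*(ε/eS L lam ε y)) * (ε*lam t*y^(2*t))
      - (k*(ε*lam k*y^k)*(ε/eS L lam ε y)) * (ε*lam t*y^t)
      + (if k = t then ((k:ℝ)*ε*lam k) * (y^k*(1-ε*y^k)) else 0) := by
    intro t ht
    have ht0 : (t:ℝ) ≠ 0 := Nat.cast_ne_zero.2 (by have := h2 t ht; omega)
    have h2t : (y:ℝ)^(2*t) = y^t * y^t := by rw [two_mul, pow_add]
    simp only [Phi, rf, h2t]
    congr 1
    field_simp
    ring
  rw [Finset.sum_congr rfl hterm]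
  simp only [Finset.sum_add_distrib, Finset.sum_sub_distrib, ← Finset.mul_sum,
    Finset.sum_ite_eq, if_pos hkL]
  simp only [SPhi, MS, PS, eS]
  ring

lemma Phi_init (L : Finset ℕ) (lam : ℕ → ℝ) (ε : ℝ) (k s : ℕ) :
    Phi L lam ε k s 1 = (if k = s then (1:ℝ) else 0) * (k : ℝ) * lam k * ε * (1 - ε) := by
  have hB : Bf L lam ε 1 = Af L lam ε := by
    simp only [Bf, Af, one_pow, mul_one]
  have hC : Cf L lam ε 1 = Af L lam ε := by
    simp only [Cf, Af, one_pow, mul_one]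
  have hpf : pf L lam ε 1 = 0 := by
    rw [pf, hB, hC, show (1-ε) * Af L lam ε / 2 - ε * Af L lam ε / 2
      + (ε - 1/2) * Af L lam ε = 0 by ring, zero_div]
  have hrf : ∀ t : ℕ, rf L lam ε t 1 = 0 := fun t => by simp [rf]
  simp only [Phi, hpf, hrf, one_pow]
  split_ifs with hks
  · ring
  · ring

set_option maxHeartbeats 1000000 in
lemma Fv_lipschitz (L : Finset ℕ) (lam : ℕ → ℝ) (ε : ℝ) (hL : L.Nonempty)
    (h2 : ∀ k ∈ L, 2 ≤ k) (hlamPos : ∀ k ∈ L, 0 < lam k) (hlamSum : ∑ k ∈ L, lam k = 1)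
    (hε : ε ∈ Set.Ioo (0:ℝ) 1) {a : ℝ} (ha : 0 < a) {y : ℝ} (hy : y ∈ Set.Icc a 1) :
    LipschitzOnWith (Real.toNNReal ((2*(L.card:ℝ)*(L.max' hL : ℝ)
      + 2*(L.max' hL : ℝ)*eS L lam ε a)/(eS L lam ε a)^2)) (Fv L lam ε y) Set.univ := by
  rw [lipschitzOnWith_univ]
  refine LipschitzWith.of_dist_le_mul fun v w => ?_
  have hy0 : 0 < y := lt_of_lt_of_le ha hy.1
  have hc0 : 0 < eS L lam ε a := eS_pos L lam ε hL hlamPos hε.1 ha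
  set km := (L.max' hL : ℝ) with hkm_def
  set c := eS L lam ε a with hc_def
  have hkm0 : 0 ≤ km := by positivity
  have hKr : 0 ≤ (2*(L.card:ℝ)*km + 2*km*c)/c^2 := by positivity
  rw [Real.coe_toNNReal _ hKr]
  set d := dist v w with hd_def
  have hd0 : 0 ≤ d := dist_nonneg
  refine (dist_pi_le_iff (by positivity)).2 fun p => ?_
  rw [Real.dist_eq]
  have hEy : 0 < eS L lam ε y := eS_pos L lam ε hL hlamPos hε.1 hy0
  have hcy : c ≤ eS L lam ε y := eS_mono L lam ε hlamPos hε.1 ha.le hy.1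
  have hxb : eS L lam ε y / y ≤ 1 := by
    rw [div_le_one hy0]
    calc eS L lam ε y ≤ ε * y := eS_le L lam ε h2 hlamPos hlamSum hε.1 hy0.le hy.2
      _ ≤ 1 * y := by nlinarith [hε.2]
      _ = y := one_mul y
  have hlb : ∀ q : {x // x ∈ L}, 0 ≤ ε * lam (q:ℕ) * y^(q:ℕ) ∧ ε * lam (q:ℕ) * y^(q:ℕ) ≤ 1 := by
    intro q
    have h1 := lam_le_one L lam hlamPos hlamSum q.2
    have h2' := hlamPos _ q.2
    have h3 : y^(q:ℕ) ≤ 1 := pow_le_one₀ hy0.le hy.2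
    have h4 : 0 < y^(q:ℕ) := by positivity
    refine ⟨mul_nonneg (mul_nonneg hε.1.le h2'.le) h4.le, ?_⟩
    have h5 : ε * lam (q:ℕ) * y ^ (q:ℕ) ≤ 1 * 1 * 1 := by
      refine mul_le_mul (mul_le_mul hε.2.le h1 h2'.le (by norm_num)) h3 h4.le (by norm_num)
    linarith
  have hkmq : ∀ q : {x // x ∈ L}, ((q:ℕ):ℝ) ≤ km := fun q =>
    Nat.cast_le.2 (L.le_max' _ q.2)
  have hq0 : ∀ q : {x // x ∈ L}, (0:ℝ) ≤ ((q:ℕ):ℝ) := fun q => Nat.cast_nonneg _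
  have hsum : ∀ q : {x // x ∈ L}, |∑ t : {x // x ∈ L}, (v (q,t) - w (q,t))|
      ≤ (L.card:ℝ) * d := by
    intro q
    calc |∑ t : {x // x ∈ L}, (v (q,t) - w (q,t))|
        ≤ ∑ t : {x // x ∈ L}, |v (q,t) - w (q,t)| := Finset.abs_sum_le_sum_abs _ _
      _ ≤ ∑ _t : {x // x ∈ L}, d := Finset.sum_le_sum (fun t _ => by
            rw [← Real.dist_eq]; exact dist_le_pi_dist v w (q,t))
      _ = (L.card:ℝ) * d := by
          rw [Finset.sum_const, Finset.card_univ, Fintype.card_coe, nsmul_eq_mul]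
  have hdiff : Fv L lam ε y v p - Fv L lam ε y w p = -(eS L lam ε y / y) * (
      (((p.2:ℕ):ℝ) * (ε*lam (p.2:ℕ)*y^(p.2:ℕ)) / (eS L lam ε y)^2) *
        (∑ t : {x // x ∈ L}, (v (p.1,t) - w (p.1,t)))
      + (((p.1:ℕ):ℝ)*(ε*lam (p.1:ℕ)*y^(p.1:ℕ))/(eS L lam ε y)^2) *
        (∑ t : {x // x ∈ L}, (v (p.2,t) - w (p.2,t)))
      - ((((p.1:ℕ):ℝ)+((p.2:ℕ):ℝ))/eS L lam ε y) * (v p - w p)) := by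
    simp only [Fv, Finset.sum_sub_distrib]
    ring
  rw [hdiff]
  set S1 := ∑ t : {x // x ∈ L}, (v (p.1,t) - w (p.1,t)) with hS1_def
  set S2 := ∑ t : {x // x ∈ L}, (v (p.2,t) - w (p.2,t)) with hS2_def
  set c1 := ((p.2:ℕ):ℝ) * (ε*lam (p.2:ℕ)*y^(p.2:ℕ)) / (eS L lam ε y)^2 with hc1_def
  set c2 := ((p.1:ℕ):ℝ) * (ε*lam (p.1:ℕ)*y^(p.1:ℕ)) / (eS L lam ε y)^2 with hc2_def
  set c3 := (((p.1:ℕ):ℝ)+((p.2:ℕ):ℝ))/eS L lam ε y with hc3_def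
  have hc10 : 0 ≤ c1 := by
    rw [hc1_def]
    have := (hlb p.2).1
    positivity
  have hc20 : 0 ≤ c2 := by
    rw [hc2_def]
    have := (hlb p.1).1
    positivity
  have hc30 : 0 ≤ c3 := by
    rw [hc3_def]
    positivity
  have hc1b : c1 ≤ km / c^2 := by
    rw [hc1_def]
    refine div_le_div₀ hkm0 ?_ (by positivity) (by nlinarith)
    nlinarith [(hlb p.2).1, (hlb p.2).2, hkmq p.2, hq0 p.2]
  have hc2b : c2 ≤ km / c^2 := by
    rw [hc2_def]
    refine div_le_div₀ hkm0 ?_ (by positivity) (by nlinarith)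
    nlinarith [(hlb p.1).1, (hlb p.1).2, hkmq p.1, hq0 p.1]
  have hc3b : c3 ≤ 2*km / c := by
    rw [hc3_def]
    refine div_le_div₀ (by positivity) ?_ hc0 hcy
    nlinarith [hkmq p.1, hkmq p.2]
  have hDp : |v p - w p| ≤ d := by rw [← Real.dist_eq]; exact dist_le_pi_dist v w p
  calc |(-(eS L lam ε y / y)) * (c1 * S1 + c2 * S2 - c3 * (v p - w p))|
      = (eS L lam ε y / y) * |c1 * S1 + c2 * S2 - c3 * (v p - w p)| := by
        rw [abs_mul, abs_neg, abs_of_nonneg (by positivity)]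
    _ ≤ 1 * |c1 * S1 + c2 * S2 - c3 * (v p - w p)| :=
        mul_le_mul_of_nonneg_right hxb (abs_nonneg _)
    _ = |c1 * S1 + c2 * S2 - c3 * (v p - w p)| := one_mul _
    _ ≤ |c1 * S1| + |c2 * S2| + |c3 * (v p - w p)| :=
        le_trans (abs_sub _ _) (by gcongr; exact abs_add_le _ _)
    _ = c1 * |S1| + c2 * |S2| + c3 * |v p - w p| := by
        rw [abs_mul, abs_mul, abs_mul, abs_of_nonneg hc10, abs_of_nonneg hc20,
          abs_of_nonneg hc30]
    _ ≤ (km/c^2) * ((L.card:ℝ) * d) + (km/c^2) * ((L.card:ℝ) * d) + (2*km/c) * d := by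
        refine add_le_add (add_le_add ?_ ?_) ?_
        · exact mul_le_mul hc1b (hsum p.1) (abs_nonneg _) (by positivity)
        · exact mul_le_mul hc2b (hsum p.2) (abs_nonneg _) (by positivity)
        · exact mul_le_mul hc3b hDp (abs_nonneg _) (by positivity)
    _ = (2*(L.card:ℝ)*km + 2*km*c)/c^2 * d := by
        field_simp
        ring

lemma delta_eq_Phi (L : Finset ℕ) (hL : L.Nonempty) (hL2 : ∀ k ∈ L, 2 ≤ k)
    (lam : ℕ → ℝ) (hlamPos : ∀ k ∈ L, 0 < lam k) (hlamSum : ∑ k ∈ L, lam k = 1)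
    (ε : ℝ) (hε : ε ∈ Set.Ioo (0 : ℝ) 1)
    (δll : ℕ → ℕ → ℝ → ℝ) (hvv : CEvv L lam ε δll) :
    ∀ y ∈ Set.Ioc (0 : ℝ) 1, ∀ k ∈ L, ∀ s ∈ L, δll k s y = Phi L lam ε k s y := by
  intro y₀ hy₀ k hk s hs
  have hsub : Set.Icc y₀ 1 ⊆ Set.Ioc (0:ℝ) 1 := fun x hx => ⟨lt_of_lt_of_le hy₀.1 hx.1, hx.2⟩
  -- the two solutions as curves in `Evv L`
  set g : ℝ → Evv L := fun t p => δll (p.1:ℕ) (p.2:ℕ) t with hg_def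
  set h : ℝ → Evv L := fun t p => Phi L lam ε (p.1:ℕ) (p.2:ℕ) t with hh_def
  have hclamp : ∀ t ∈ Set.Ioc y₀ (1:ℝ), max y₀ (min t 1) = t := fun t ht => by
    rw [min_eq_left ht.2, max_eq_right ht.1.le]
  have hclamp_mem : ∀ t : ℝ, max y₀ (min t 1) ∈ Set.Icc y₀ 1 :=
    fun t => ⟨le_max_left _ _, max_le hy₀.2 (min_le_right _ _)⟩
  have heSne : ∀ t : ℝ, 0 < t → eS L lam ε t ≠ 0 :=
    fun t ht => (eS_pos L lam ε hL hlamPos hε.1 ht).ne'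
  -- derivative facts transported to the vector field `Fv`
  have hmem : ∀ t ∈ Set.Ioc y₀ (1:ℝ), Set.Ioc (0:ℝ) 1 ∈ nhdsWithin t (Set.Iic t) := by
    intro t ht
    have h0 : 0 < t := lt_trans hy₀.1 ht.1
    refine Filter.mem_of_superset (inter_mem_nhdsWithin (Set.Iic t) (Ioi_mem_nhds h0)) ?_
    rintro x ⟨hx1, hx2⟩
    exact ⟨hx2, le_trans hx1 ht.2⟩
  have hFg : ∀ t ∈ Set.Ioc y₀ (1:ℝ),
      HasDerivWithinAt g (Fv L lam ε (max y₀ (min t 1)) (g t)) (Set.Iic t) t := by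
    intro t ht
    have ht01 : t ∈ Set.Ioc (0:ℝ) 1 := ⟨lt_trans hy₀.1 ht.1, ht.2⟩
    refine HasDerivWithinAt.mono_of_mem_nhdsWithin ?_ (hmem t ht)
    refine hasDerivWithinAt_pi.2 fun p => ?_
    have hcomp := hvv.1 (p.1:ℕ) p.1.2 (p.2:ℕ) p.2.2 t ht01
    refine hcomp.congr_deriv ?_
    symm
    rw [hclamp t ht]
    simp only [Fv, hg_def, lhat]
    rw [xF_eq L lam ε hL2 (ne_of_gt ht01.1), eF_eq L lam ε hL2]
    rw [Finset.sum_coe_sort L (fun n => δll (p.1:ℕ) n t),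
      Finset.sum_coe_sort L (fun n => δll (p.2:ℕ) n t)]
  have hFh : ∀ t ∈ Set.Ioc y₀ (1:ℝ),
      HasDerivWithinAt h (Fv L lam ε (max y₀ (min t 1)) (h t)) (Set.Iic t) t := by
    intro t ht
    have ht01 : t ∈ Set.Ioc (0:ℝ) 1 := ⟨lt_trans hy₀.1 ht.1, ht.2⟩
    refine HasDerivWithinAt.mono_of_mem_nhdsWithin ?_ (hmem t ht)
    refine hasDerivWithinAt_pi.2 fun p => ?_
    have hode := (Phi_ode L lam ε hL2 p.1.2 p.2.2 (ne_of_gt ht01.1)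
      (heSne t ht01.1)).hasDerivWithinAt (s := Set.Ioc (0:ℝ) 1)
    convert hode using 1
    rw [hclamp t ht]
    simp only [Fv, hh_def, FcE]
    rw [Finset.sum_coe_sort L (fun n => Phi L lam ε (p.1:ℕ) n t),
      Finset.sum_coe_sort L (fun n => Phi L lam ε (p.2:ℕ) n t),
      sum_Phi L lam ε hL2 p.1.2 (heSne t ht01.1),
      sum_Phi L lam ε hL2 p.2.2 (heSne t ht01.1)]
  have hcontg : ContinuousOn g (Set.Icc y₀ 1) := by
    intro t ht
    refine continuousWithinAt_pi.2 fun p => ?_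
    exact ((hvv.1 (p.1:ℕ) p.1.2 (p.2:ℕ) p.2.2 t (hsub ht)).continuousWithinAt).mono hsub
  have hconth : ContinuousOn h (Set.Icc y₀ 1) := by
    intro t ht
    refine continuousWithinAt_pi.2 fun p => ?_
    have h0 : 0 < t := lt_of_lt_of_le hy₀.1 ht.1
    exact ((Phi_ode L lam ε hL2 p.1.2 p.2.2 h0.ne'
      (heSne t h0)).continuousAt).continuousWithinAt
  have hinit : g 1 = h 1 := by
    funext p
    rw [hg_def, hh_def]
    show δll (p.1:ℕ) (p.2:ℕ) 1 = Phi L lam ε (p.1:ℕ) (p.2:ℕ) 1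
    rw [hvv.2 (p.1:ℕ) p.1.2 (p.2:ℕ) p.2.2, Phi_init]
  have := ODE_solution_unique_of_mem_Icc_left
    (v := fun t => Fv L lam ε (max y₀ (min t 1))) (s := fun _ => Set.univ)
    (fun t _ => Fv_lipschitz L lam ε hL hL2 hlamPos hlamSum hε hy₀.1 (hclamp_mem t))
    hcontg hFg (fun _ _ => Set.mem_univ _) hconth hFh (fun _ _ => Set.mem_univ _) hinit
  have hy₀' : y₀ ∈ Set.Icc y₀ (1:ℝ) := ⟨le_refl _, hy₀.2⟩
  have := this hy₀'
  exact congrFun this (⟨k, hk⟩, ⟨s, hs⟩)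

theorem statement_6
    (L R : Finset ℕ) (hL : L.Nonempty) (hR : R.Nonempty)
    (hL2 : ∀ k ∈ L, 2 ≤ k) (hR2 : ∀ k ∈ R, 2 ≤ k)
    (lam rho : ℕ → ℝ)
    (hlamPos : ∀ k ∈ L, 0 < lam k) (hlamSum : ∑ k ∈ L, lam k = 1)
    (hrhoPos : ∀ k ∈ R, 0 < rho k) (hrhoSum : ∑ k ∈ R, rho k = 1)
    (ε : ℝ) (hε : ε ∈ Set.Ioo (0 : ℝ) 1)
    (δll : ℕ → ℕ → ℝ → ℝ) (hvv : CEvv L lam ε δll) :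
    ∀ y ∈ Set.Ioc (0 : ℝ) 1,
      (∑ k ∈ L, δll k k y / ((k : ℝ) ^ 2 * lhat lam ε k y)) =
        ε * (1 - ε) / eF L lam ε y * (∑ k ∈ L, lam k / (k : ℝ))
        + ∑ k ∈ L, ((lhat lam ε k y - eF L lam ε y) / eF L lam ε y) * ((ε * y ^ k - 1) / (k : ℝ)) := by
  intro y hy
  obtain ⟨hy0, hy1⟩ := hy
  have hεne : ε ≠ 0 := hε.1.ne'
  have heS0 : 0 < eS L lam ε y := eS_pos L lam ε hL hlamPos hε.1 hy0
  have heS : eS L lam ε y ≠ 0 := heS0.ne'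
  have heq := delta_eq_Phi L hL hL2 lam hlamPos hlamSum ε hε δll hvv y ⟨hy0, hy1⟩
  have hLHS : ∑ k ∈ L, δll k k y / ((k:ℝ)^2 * lhat lam ε k y)
      = 2*pf L lam ε y*eS L lam ε y + (2*ε/eS L lam ε y)*(Cf L lam ε y - Bf L lam ε y)
        + ∑ k ∈ L, (1 - ε*y^k)/(k:ℝ) := by
    have hterm : ∀ k ∈ L, δll k k y / ((k:ℝ)^2 * lhat lam ε k y)
        = 2*pf L lam ε y * (ε*lam k*y^k)
          + (2*ε/eS L lam ε y)*(ε*lam k*y^(2*k)/k - ε*lam k*y^k/k)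
          + (1 - ε*y^k)/(k:ℝ) := by
      intro k hk
      rw [heq k hk k hk]
      have hk0 : (k:ℝ) ≠ 0 := Nat.cast_ne_zero.2 (by have := hL2 k hk; omega)
      have hlk : lam k ≠ 0 := (hlamPos k hk).ne'
      have hyk : (y:ℝ)^k ≠ 0 := pow_ne_zero _ hy0.ne'
      have h2t : (y:ℝ)^(2*k) = y^k * y^k := by rw [two_mul, pow_add]
      simp only [Phi, rf, lhat, if_true, h2t]
      field_simp
      ring
    rw [Finset.sum_congr rfl hterm]
    simp only [Finset.sum_add_distrib, ← Finset.mul_sum, Finset.sum_sub_distrib]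
    simp only [eS, Cf, Bf]
  have hAf : ∑ k ∈ L, lam k / (k:ℝ) = Af L lam ε / ε := by
    rw [Af, Finset.sum_div]
    refine Finset.sum_congr rfl fun k hk => ?_
    have hk0 : (k:ℝ) ≠ 0 := Nat.cast_ne_zero.2 (by have := hL2 k hk; omega)
    field_simp
  have hterm2 : ∀ k ∈ L, ((lhat lam ε k y - eS L lam ε y) / eS L lam ε y) * ((ε * y ^ k - 1) / (k:ℝ))
      = (ε/eS L lam ε y)*(ε*lam k*y^(2*k)/k) - (1/eS L lam ε y)*(ε*lam k*y^k/k)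
        + (1 - ε*y^k)/(k:ℝ) := by
    intro k hk
    have hk0 : (k:ℝ) ≠ 0 := Nat.cast_ne_zero.2 (by have := hL2 k hk; omega)
    have h2t : (y:ℝ)^(2*k) = y^k * y^k := by rw [two_mul, pow_add]
    simp only [lhat, h2t]
    field_simp
    ring
  have hRHS : ε * (1 - ε) / eF L lam ε y * (∑ k ∈ L, lam k / (k:ℝ))
      + ∑ k ∈ L, ((lhat lam ε k y - eF L lam ε y) / eF L lam ε y) * ((ε * y ^ k - 1) / (k:ℝ))
      = ε*(1-ε)/eS L lam ε y * (Af L lam ε/ε)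
        + ((ε/eS L lam ε y)*Cf L lam ε y - (1/eS L lam ε y)*Bf L lam ε y
           + ∑ k ∈ L, (1 - ε*y^k)/(k:ℝ)) := by
    rw [eF_eq L lam ε hL2, hAf, Finset.sum_congr rfl hterm2]
    simp only [Finset.sum_add_distrib, ← Finset.mul_sum, Finset.sum_sub_distrib]
    simp only [Cf, Bf]
  rw [hLHS, hRHS]
  simp only [pf]
  field_simp
  ring

end LDPC
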